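/- For the discrete exponential-polynomial model with θ_d < 0, limsup_{k→∞} |Δ⁺p_θ(k)·(1-P_θ(k))/(p_θ(k)·p_θ(k+1))| ≤ 1; in particular condition (C2) holds. -/

import Mathlib

open Filter Finset Topology



lemma aux_pow_div_tendsto_zero {i n : ℕ} (h : i < n) :
    Tendsto (fun k : ℕ => (k : ℝ) ^ i / (k : ℝ) ^ n) atTop (𝓝 0) := by
  have heq : ∀ᶠ k : ℕ in atTop, ((k : ℝ) ^ (n - i))⁻¹ = (k : ℝ) ^ i / (k : ℝ) ^ n := by
    filter_upwards [eventually_ge_atTop 1] with k hk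
    have hk0 : (k : ℝ) ≠ 0 := by simpa using Nat.one_le_iff_ne_zero.mp hk
    have hpow : (k : ℝ) ^ n = (k : ℝ) ^ i * (k : ℝ) ^ (n - i) := by
      rw [← pow_add, Nat.add_sub_cancel' h.le]
    rw [hpow, div_mul_cancel_left₀ (pow_ne_zero _ hk0)]
  apply Tendsto.congr' heq
  exact Tendsto.inv_tendsto_atTop
    ((tendsto_pow_atTop (by omega)).comp tendsto_natCast_atTop_atTop)

lemma aux_pow_ratio {i d : ℕ} (hi : i < d) :
    Tendsto (fun k : ℕ => (k : ℝ) ^ i / (k : ℝ) ^ (d - 1))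
      atTop (𝓝 (if i = d - 1 then 1 else 0)) := by
  rcases eq_or_ne i (d - 1) with h | h
  · simp only [h, if_pos rfl]
    have : ∀ᶠ k : ℕ in atTop, (1:ℝ) = (k : ℝ) ^ (d-1) / (k : ℝ) ^ (d - 1) := by
      filter_upwards [eventually_ge_atTop 1] with k hk
      have hk0 : (k : ℝ) ≠ 0 := by simpa using Nat.one_le_iff_ne_zero.mp hk
      rw [div_self (pow_ne_zero _ hk0)]
    exact Tendsto.congr' this tendsto_const_nhds
  · simp only [if_neg h]
    exact aux_pow_div_tendsto_zero (by omega)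

lemma aux_one_add_inv : Tendsto (fun k : ℕ => (1 : ℝ) + (k : ℝ)⁻¹) atTop (𝓝 1) := by
  have : Tendsto (fun k : ℕ => ((k:ℝ))⁻¹) atTop (𝓝 0) :=
    Tendsto.inv_tendsto_atTop tendsto_natCast_atTop_atTop
  simpa using tendsto_const_nhds.add this

lemma aux_incr_ratio {i d : ℕ} (hi : i < d) (hd : 1 ≤ d) :
    Tendsto (fun k : ℕ => (((k:ℝ)+1)^(i+1) - (k:ℝ)^(i+1)) / (k:ℝ)^(d-1))
      atTop (𝓝 ((i+1 : ℝ) * (if i = d - 1 then 1 else 0))) := by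
  set L : ℝ := if i = d - 1 then 1 else 0 with hL
  have heq : ∀ᶠ k : ℕ in atTop,
      (∑ j ∈ range (i+1), ((1:ℝ) + (k:ℝ)⁻¹) ^ j * ((k:ℝ)^i / (k:ℝ)^(d-1)))
        = (((k:ℝ)+1)^(i+1) - (k:ℝ)^(i+1)) / (k:ℝ)^(d-1) := by
    filter_upwards [eventually_ge_atTop 1] with k hk
    have hk0 : (k : ℝ) ≠ 0 := by simpa using Nat.one_le_iff_ne_zero.mp hk
    have hgs : (((k:ℝ)+1)^(i+1) - (k:ℝ)^(i+1))
        = ∑ j ∈ range (i+1), ((k:ℝ)+1) ^ j * (k:ℝ) ^ (i - j) := by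
      have := geom_sum₂_mul ((k:ℝ)+1) (k:ℝ) (i+1)
      simp only [add_sub_cancel_left, mul_one] at this
      rw [← this]
      congr 1
    rw [hgs, Finset.sum_div]
    refine Finset.sum_congr rfl fun j hj => ?_
    have hji : j ≤ i := by simpa [Nat.lt_succ_iff] using hj
    have h1 : ((k:ℝ)+1) ^ j = ((1:ℝ) + (k:ℝ)⁻¹) ^ j * (k:ℝ) ^ j := by
      rw [← mul_pow]; congr 1; field_simp
    rw [h1, mul_assoc, ← pow_add, Nat.add_sub_cancel' hji, mul_div_assoc]
  apply Tendsto.congr' heq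
  have hlim : Tendsto (fun k : ℕ =>
      ∑ j ∈ range (i+1), ((1:ℝ) + (k:ℝ)⁻¹) ^ j * ((k:ℝ)^i / (k:ℝ)^(d-1)))
      atTop (𝓝 (∑ j ∈ range (i+1), (1:ℝ) * L)) := by
    refine tendsto_finset_sum _ fun j _ => ?_
    have h1 : Tendsto (fun k : ℕ => ((1:ℝ) + (k:ℝ)⁻¹) ^ j) atTop (𝓝 1) := by
      simpa using aux_one_add_inv.pow j
    exact h1.mul (aux_pow_ratio hi)
  have hs : (∑ j ∈ range (i+1), (1:ℝ) * L) = ((i:ℝ)+1) * L := by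
    rw [Finset.sum_const, card_range, nsmul_eq_mul]
    push_cast; ring
  rw [hs] at hlim
  exact hlim

lemma aux_g_atBot (d : ℕ) (hd : 2 ≤ d) (θ : ℕ → ℝ) (hθ : θ (d-1) < 0) :
    Tendsto (fun k : ℕ =>
      (∑ i ∈ range d, θ i * ((k:ℝ)+1)^(i+1)) - ∑ i ∈ range d, θ i * (k:ℝ)^(i+1))
      atTop atBot := by
  have hd1 : 1 ≤ d := by omega
  set c : ℝ := ∑ i ∈ range d, θ i * ((i+1 : ℝ) * (if i = d - 1 then 1 else 0)) with hc
  have hdiv : Tendsto (fun k : ℕ =>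
      ((∑ i ∈ range d, θ i * ((k:ℝ)+1)^(i+1)) - ∑ i ∈ range d, θ i * (k:ℝ)^(i+1))
        / (k:ℝ)^(d-1)) atTop (𝓝 c) := by
    have heq : ∀ k : ℕ,
        ((∑ i ∈ range d, θ i * ((k:ℝ)+1)^(i+1)) - ∑ i ∈ range d, θ i * (k:ℝ)^(i+1))
          / (k:ℝ)^(d-1)
        = ∑ i ∈ range d, θ i * ((((k:ℝ)+1)^(i+1) - (k:ℝ)^(i+1)) / (k:ℝ)^(d-1)) := by
      intro k
      rw [← Finset.sum_sub_distrib, Finset.sum_div]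
      refine Finset.sum_congr rfl fun i _ => ?_
      rw [← mul_sub, mul_div_assoc]
    simp only [heq]
    exact tendsto_finset_sum _ fun i hi =>
      (tendsto_const_nhds.mul (aux_incr_ratio (mem_range.mp hi) hd1))
  have hcval : c = θ (d-1) * d := by
    rw [hc, Finset.sum_eq_single_of_mem (d-1) (mem_range.mpr (by omega))]
    · rw [if_pos rfl, mul_one]
      congr 1
      push_cast [Nat.cast_sub hd1]
      ring
    · intro i _ hne
      rw [if_neg hne, mul_zero, mul_zero]
  have hcneg : c < 0 := by
    rw [hcval]
    exact mul_neg_of_neg_of_pos hθ (by positivity)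
  have hpow : Tendsto (fun k : ℕ => (k:ℝ)^(d-1)) atTop atTop :=
    (tendsto_pow_atTop (by omega)).comp tendsto_natCast_atTop_atTop
  have hfin := hdiv.neg_mul_atTop hcneg hpow
  refine Tendsto.congr' ?_ hfin
  filter_upwards [eventually_ge_atTop 1] with k hk
  have hk0 : ((k:ℝ))^(d-1) ≠ 0 := by
    have : (k : ℝ) ≠ 0 := by simpa using Nat.one_le_iff_ne_zero.mp hk
    positivity
  exact div_mul_cancel₀ _ hk0


/-- Condition (C2) for the discrete exponential-polynomial model:
`limsup_k |Δ⁺p(k)(1-P(k))/(p(k)p(k+1))| ≤ 1`, and in particular the quantity is bounded. -/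
theorem stmt_14 (d : ℕ) (hd : 2 ≤ d) (θ : ℕ → ℝ) (hθ : θ (d - 1) < 0)
    (C : ℝ) (p : ℕ → ℝ) (P : ℕ → ℝ)
    (hC : C = ∑' k : ℕ, Real.exp (∑ i ∈ Finset.range d, θ i * ((k : ℝ) + 1) ^ (i + 1)))
    (hp : ∀ k : ℕ, 1 ≤ k →
      p k = C⁻¹ * Real.exp (∑ i ∈ Finset.range d, θ i * (k : ℝ) ^ (i + 1)))
    (hP : ∀ k : ℕ, P k = ∑ ℓ ∈ Finset.Icc 1 k, p ℓ) :
    Filter.limsup (fun k : ℕ =>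
        |(p (k + 1) - p k) * (1 - P k) / (p k * p (k + 1))|) Filter.atTop ≤ 1 ∧
    ∃ M : ℝ, ∀ k : ℕ, 1 ≤ k →
      |(p (k + 1) - p k) * (1 - P k) / (p k * p (k + 1))| ≤ M := by
  set q : ℕ → ℝ := fun k => ∑ i ∈ Finset.range d, θ i * (k : ℝ) ^ (i + 1) with hq
  set f : ℕ → ℝ := fun k => Real.exp (q k) with hf
  have hfpos : ∀ k, 0 < f k := fun k => Real.exp_pos _
  have hC' : C = ∑' k : ℕ, f (k + 1) := by
    rw [hC]
    congr 1; funext k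
    simp only [hf, hq]
    congr 1
    refine Finset.sum_congr rfl fun i _ => ?_
    push_cast
    ring
  have hg : Tendsto (fun k : ℕ => q (k + 1) - q k) atTop atBot := by
    have h := aux_g_atBot d hd θ hθ
    refine h.congr fun k => ?_
    simp only [hq]
    congr 1
    refine Finset.sum_congr rfl fun i _ => ?_
    push_cast
    ring
  have hratio : Tendsto (fun k : ℕ => f (k + 1) / f k) atTop (𝓝 0) := by
    have := Real.tendsto_exp_atBot.comp hg
    refine this.congr fun k => ?_
    simp [hf, Real.exp_sub]
  have hδ : ∀ r : ℝ, 0 < r → ∃ K : ℕ, ∀ m, K ≤ m → f (m + 1) ≤ r * f m := by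
    intro r hr
    have := hratio.eventually_lt_const hr
    rw [eventually_atTop] at this
    obtain ⟨K, hK⟩ := this
    exact ⟨K, fun m hm => by
      have := hK m hm
      rw [div_lt_iff₀ (hfpos m)] at this
      linarith⟩
  have hsum : Summable (fun k : ℕ => f (k + 1)) := by
    obtain ⟨K, hK⟩ := hδ (1/2) (by norm_num)
    refine summable_of_ratio_norm_eventually_le (r := 1/2) (by norm_num) ?_
    filter_upwards [eventually_ge_atTop K] with k hk
    rw [Real.norm_of_nonneg (hfpos _).le, Real.norm_of_nonneg (hfpos _).le]
    exact hK (k + 1) (by omega)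
  have hCpos : 0 < C := by
    rw [hC']
    exact Summable.tsum_pos hsum (fun k => (hfpos _).le) 0 (hfpos _)
  have hpf : ∀ k : ℕ, 1 ≤ k → p k = C⁻¹ * f k := hp
  have hppos : ∀ k : ℕ, 1 ≤ k → 0 < p k := by
    intro k hk
    rw [hpf k hk]
    exact mul_pos (inv_pos.mpr hCpos) (hfpos k)
  have hTsum : ∀ k : ℕ, Summable (fun j : ℕ => f (j + k + 1)) := by
    intro k
    have := (_root_.summable_nat_add_iff (f := fun j : ℕ => f (j + 1)) k).mpr hsum
    exact this.congr fun j => by ring_nf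
  have htail : ∀ k : ℕ, 1 ≤ k → 1 - P k = C⁻¹ * ∑' j : ℕ, f (j + k + 1) := by
    intro k hk
    have hPk : P k = C⁻¹ * ∑ j ∈ Finset.range k, f (j + 1) := by
      rw [hP k, ← Finset.Ico_add_one_right_eq_Icc, Finset.sum_Ico_eq_sum_range]
      norm_num
      rw [Finset.mul_sum]
      refine Finset.sum_congr rfl fun j _ => ?_
      rw [hpf (1 + j) (by omega), add_comm 1 j]
    have hsplit : (∑ j ∈ Finset.range k, f (j + 1)) + (∑' j : ℕ, f (j + k + 1)) = C := by
      rw [hC']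
      exact Summable.sum_add_tsum_nat_add k hsum
    have hCne : C ≠ 0 := hCpos.ne'
    rw [hPk]
    have : (∑ j ∈ Finset.range k, f (j + 1)) = C - ∑' j : ℕ, f (j + k + 1) := by
      linarith
    rw [this]
    field_simp
    ring
  have htail_le : ∀ r : ℝ, 0 < r → r < 1 → ∃ K : ℕ, 1 ≤ K ∧ ∀ k, K ≤ k →
      (∑' j : ℕ, f (j + k + 1)) ≤ f (k + 1) * (1 - r)⁻¹ := by
    intro r hr hr1
    obtain ⟨K₀, hK₀⟩ := hδ r hr
    refine ⟨max K₀ 1, le_max_right _ _, fun k hk => ?_⟩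
    have hK₀k : K₀ ≤ k := le_trans (le_max_left _ _) hk
    have hbound : ∀ j : ℕ, f (j + k + 1) ≤ r ^ j * f (k + 1) := by
      intro j
      induction j with
      | zero => simp
      | succ n ih =>
        have h1 : f (n + k + 1 + 1) ≤ r * f (n + k + 1) := hK₀ _ (by omega)
        have he : n + 1 + k + 1 = n + k + 1 + 1 := by omega
        calc f (n + 1 + k + 1) = f (n + k + 1 + 1) := by rw [he]
          _ ≤ r * f (n + k + 1) := h1
          _ ≤ r * (r ^ n * f (k + 1)) := mul_le_mul_of_nonneg_left ih hr.le
          _ = r ^ (n + 1) * f (k + 1) := by ring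
    have hgeo : Summable (fun j : ℕ => r ^ j * f (k + 1)) :=
      (summable_geometric_of_lt_one hr.le hr1).mul_right _
    calc (∑' j : ℕ, f (j + k + 1)) ≤ ∑' j : ℕ, r ^ j * f (k + 1) :=
          Summable.tsum_le_tsum hbound (hTsum k) hgeo
      _ = (1 - r)⁻¹ * f (k + 1) := by
          rw [tsum_mul_right, tsum_geometric_of_lt_one hr.le hr1]
      _ = f (k + 1) * (1 - r)⁻¹ := mul_comm _ _
  have key : ∀ r : ℝ, 0 < r → r < 1 → ∀ᶠ k : ℕ in atTop,
      |(p (k + 1) - p k) * (1 - P k) / (p k * p (k + 1))| ≤ (1 - r)⁻¹ := by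
    intro r hr hr1
    obtain ⟨K, _, hK⟩ := htail_le r hr hr1
    obtain ⟨K₀, hK₀⟩ := hδ r hr
    filter_upwards [eventually_ge_atTop K, eventually_ge_atTop K₀,
      eventually_ge_atTop 1] with k hkK hkK₀ hk1
    have hpk := hppos k hk1
    have hpk1 := hppos (k + 1) (by omega)
    have hle : p (k + 1) ≤ p k := by
      rw [hpf k hk1, hpf (k + 1) (by omega)]
      have h2 := hK₀ k hkK₀
      have h3 : f (k + 1) ≤ f k := le_trans h2 (by nlinarith [hfpos k])
      exact mul_le_mul_of_nonneg_left h3 (inv_nonneg.mpr hCpos.le)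
    have h1P : 0 ≤ 1 - P k := by
      rw [htail k hk1]
      exact mul_nonneg (inv_nonneg.mpr hCpos.le) (tsum_nonneg fun j => (hfpos _).le)
    have hTb : 1 - P k ≤ p (k + 1) * (1 - r)⁻¹ := by
      rw [htail k hk1, hpf (k + 1) (by omega)]
      calc C⁻¹ * ∑' j : ℕ, f (j + k + 1) ≤ C⁻¹ * (f (k + 1) * (1 - r)⁻¹) :=
            mul_le_mul_of_nonneg_left (hK k hkK) (inv_nonneg.mpr hCpos.le)
        _ = C⁻¹ * f (k + 1) * (1 - r)⁻¹ := by ring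
    have hnum : (p (k + 1) - p k) * (1 - P k) / (p k * p (k + 1)) ≤ 0 := by
      apply div_nonpos_of_nonpos_of_nonneg
      · exact mul_nonpos_of_nonpos_of_nonneg (by linarith) h1P
      · positivity
    rw [abs_of_nonpos hnum, ← neg_div, ← neg_mul, neg_sub]
    rw [div_le_iff₀ (by positivity : (0:ℝ) < p k * p (k + 1))]
    nlinarith [mul_le_mul_of_nonneg_left hTb hpk.le, mul_nonneg hpk1.le h1P]
  constructor
  · refine le_of_forall_pos_le_add fun ε hε => ?_
    have h1ε : (0:ℝ) < 1 + ε := by linarith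
    have hr : (0:ℝ) < ε / (1 + ε) := by positivity
    have hr1 : ε / (1 + ε) < 1 := by rw [div_lt_one h1ε]; linarith
    have hkey := key _ hr hr1
    have hval : (1 - ε / (1 + ε))⁻¹ = 1 + ε := by
      have h2 : 1 - ε / (1 + ε) = 1 / (1 + ε) := by field_simp; ring
      rw [h2, one_div, inv_inv]
    rw [hval] at hkey
    exact Filter.limsup_le_of_le (isCoboundedUnder_le_of_le atTop fun i => abs_nonneg _) hkey
  · have hkey := key (1/2) (by norm_num) (by norm_num)
    norm_num [eventually_atTop] at hkey
    obtain ⟨K₁, hK₁⟩ := hkey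
    refine ⟨2 + ∑ j ∈ Finset.range K₁,
      |(p (j + 1) - p j) * (1 - P j) / (p j * p (j + 1))|, fun k _ => ?_⟩
    have hsumnn : (0:ℝ) ≤ ∑ j ∈ Finset.range K₁,
        |(p (j + 1) - p j) * (1 - P j) / (p j * p (j + 1))| :=
      Finset.sum_nonneg fun j _ => abs_nonneg _
    by_cases hcase : K₁ ≤ k
    · have := hK₁ k hcase
      linarith
    · push_neg at hcase
      have hmem : k ∈ Finset.range K₁ := Finset.mem_range.mpr hcase
      have hs := Finset.single_le_sum
        (f := fun j => |(p (j + 1) - p j) * (1 - P j) / (p j * p (j + 1))|)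
        (fun j _ => abs_nonneg _) hmem
      linarith
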